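/- Let q ≥ 2 be an integer, d ≥ 2, and let (u_n) satisfy u_0 = 1, u_{n+1} = 1 - (1 - u_n/q^{d-1})^{q^{d-1}}. Then n·u_n converges to 2q^{d-1}/(q^{d-1} - 1) as n → ∞; equivalently u_n ~ 1/(c·n) with c = (q^{d-1}-1)/(2q^{d-1}). -/

import Mathlib

open Filter Topology Finset

private lemma bern_strict {a : ℝ} (ha : -1 < a) (ha0 : a ≠ 0) :
    ∀ n : ℕ, 2 ≤ n → 1 + (n : ℝ) * a < (1 + a) ^ n := by
  intro n hn
  induction n, hn using Nat.le_induction with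
  | base =>
    have : a ^ 2 > 0 := by positivity
    push_cast
    nlinarith
  | succ k hk ih =>
    have h1 : (0:ℝ) < 1 + a := by linarith
    have hk0 : (0:ℝ) ≤ (k:ℝ) := by positivity
    push_cast
    calc 1 + ((k:ℝ)+1) * a ≤ (1 + (k:ℝ)*a)*(1+a) := by nlinarith [sq_nonneg a]
      _ < (1+a)^k * (1+a) := mul_lt_mul_of_pos_right ih h1
      _ = (1+a)^(k+1) := (pow_succ _ _).symm

/-- The tail of the binomial expansion of `(1-t)^m` after the first two terms. -/
private noncomputable def hAux (m : ℕ) (t : ℝ) : ℝ :=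
  ∑ j ∈ Finset.range (m - 1), (-t)^j * (m.choose (j+2))

private lemma pow_expand (m : ℕ) (hm : 2 ≤ m) (t : ℝ) :
    (1 - t) ^ m = 1 - (m:ℝ) * t + t^2 * hAux m t := by
  unfold hAux
  obtain ⟨k, rfl⟩ : ∃ k, m = k + 2 := ⟨m - 2, by omega⟩
  rw [show (1 - t) = (-t) + 1 by ring, add_pow]
  rw [show k + 2 + 1 = (k + 1) + 1 + 1 from rfl, Finset.sum_range_succ',
    Finset.sum_range_succ']
  rw [Finset.mul_sum]
  rw [Finset.sum_congr rfl (fun j _ => show (-t)^(j+1+1) * 1^(k+2-(j+1+1)) * ((k+2).choose (j+1+1) : ℝ)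
      = t^2 * ((-t)^j * ((k+2).choose (j+2) : ℝ)) from by rw [one_pow]; ring)]
  simp [Nat.choose_one_right]
  ring

private lemma hAux_cont (m : ℕ) : Continuous (hAux m) := by
  unfold hAux
  exact continuous_finset_sum _ fun j _ => (continuous_id.neg.pow j).mul continuous_const

private lemma hAux_zero (m : ℕ) (hm : 2 ≤ m) : hAux m 0 = (m.choose 2 : ℝ) := by
  unfold hAux
  rw [Finset.sum_eq_single 0]
  · simp
  · intro j _ hj
    rcases Nat.exists_eq_succ_of_ne_zero hj with ⟨i, rfl⟩
    simp [pow_succ]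
  · intro habs; exfalso; apply habs; simp; omega

/-- With `u 0 = 1` and `u (n+1) = 1 - (1 - u n / q^(d-1))^(q^(d-1))`
(`q ≥ 2`, `d ≥ 2`), one has `n * u n → 2 q^(d-1) / (q^(d-1) - 1)`. -/
theorem kakeya_sequence_asymptotics
    (q : ℕ) (hq : 2 ≤ q) (d : ℕ) (hd : 2 ≤ d)
    (u : ℕ → ℝ) (h0 : u 0 = 1)
    (hrec : ∀ n, u (n + 1) = 1 - (1 - u n / (q : ℝ) ^ (d - 1)) ^ (q ^ (d - 1))) :
    Tendsto (fun n : ℕ => (n : ℝ) * u n) atTop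
      (𝓝 (2 * (q : ℝ) ^ (d - 1) / ((q : ℝ) ^ (d - 1) - 1))) := by
  set m : ℕ := q ^ (d - 1) with hm_def
  have hm : 2 ≤ m := le_trans hq (Nat.le_self_pow (by omega) q)
  have hMcast : (q : ℝ) ^ (d - 1) = (m : ℝ) := by push_cast [hm_def]; ring
  have hM2 : (2:ℝ) ≤ (m:ℝ) := by exact_mod_cast hm
  have hM0 : (0:ℝ) < (m:ℝ) := by linarith
  rw [hMcast] at hrec ⊢
  have hkey : ∀ x : ℝ, 1 - (1 - x / (m:ℝ)) ^ m = x - x^2 * hAux m (x/(m:ℝ)) / (m:ℝ)^2 := by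
    intro x
    rw [pow_expand m hm (x/(m:ℝ))]
    have h1 : (m:ℝ) * (x/(m:ℝ)) = x := by field_simp
    have h2 : (x/(m:ℝ))^2 = x^2/(m:ℝ)^2 := by rw [div_pow]
    rw [h1, h2]
    ring
  -- positivity and boundedness
  have hbd : ∀ n, 0 < u n ∧ u n ≤ 1 := by
    intro n
    induction n with
    | zero => rw [h0]; constructor <;> norm_num
    | succ k ih =>
      obtain ⟨h1, h2⟩ := ih
      have ht0 : 0 ≤ 1 - u k / (m:ℝ) := by
        have : u k / (m:ℝ) ≤ 1 := by
          rw [div_le_one hM0]; linarith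
        linarith
      have ht1 : 1 - u k / (m:ℝ) < 1 := by
        have : 0 < u k / (m:ℝ) := div_pos h1 hM0
        linarith
      have hp0 : 0 ≤ (1 - u k / (m:ℝ)) ^ m := pow_nonneg ht0 m
      have hp1 : (1 - u k / (m:ℝ)) ^ m < 1 := pow_lt_one₀ ht0 ht1 (by omega)
      rw [hrec k]
      constructor <;> linarith
  -- monotone decreasing
  have hanti : ∀ n, u (n+1) ≤ u n := by
    intro n
    obtain ⟨h1, h2⟩ := hbd n
    have hb := one_add_mul_le_pow (a := -(u n / (m:ℝ))) (by
      have : u n / (m:ℝ) ≤ 1 := by rw [div_le_one hM0]; linarith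
      linarith) m
    rw [hrec n]
    have hmul : (m:ℝ) * (u n / (m:ℝ)) = u n := by field_simp
    calc 1 - (1 - u n / (m:ℝ)) ^ m ≤ 1 - (1 + (m:ℝ) * (-(u n / (m:ℝ)))) := by
          rw [show (1:ℝ) - u n / (m:ℝ) = 1 + -(u n/(m:ℝ)) by ring]; linarith
      _ = u n := by rw [mul_neg, hmul]; ring
  -- convergence to 0
  have hmono : Antitone u := antitone_nat_of_succ_le hanti
  have hbdd : BddBelow (Set.range u) := ⟨0, by rintro x ⟨n, rfl⟩; exact (hbd n).1.le⟩
  set L : ℝ := ⨅ n, u n with hL_def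
  have hlim : Tendsto u atTop (𝓝 L) := tendsto_atTop_ciInf hmono hbdd
  have hL0 : 0 ≤ L := le_ciInf fun n => (hbd n).1.le
  have hL1 : L ≤ 1 := (ciInf_le hbdd 0).trans (by rw [h0])
  have hLfix : 1 - (1 - L / (m:ℝ)) ^ m = L := by
    have hc : Continuous fun x : ℝ => 1 - (1 - x / (m:ℝ)) ^ m :=
      continuous_const.sub ((continuous_const.sub (continuous_id.div_const _)).pow m)
    have h1 : Tendsto (fun n => u (n+1)) atTop (𝓝 L) := hlim.comp (tendsto_add_atTop_nat 1)
    have h2 : Tendsto (fun n => u (n+1)) atTop (𝓝 (1 - (1 - L / (m:ℝ)) ^ m)) := by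
      simp only [hrec]
      exact (hc.tendsto L).comp hlim
    exact tendsto_nhds_unique h2 h1
  have hLzero : L = 0 := by
    by_contra hL
    have hLpos : 0 < L := lt_of_le_of_ne hL0 (Ne.symm hL)
    have ha : -1 < -(L / (m:ℝ)) := by
      have : L / (m:ℝ) ≤ 1/2 := by
        rw [div_le_div_iff₀ hM0 (by norm_num)]; linarith
      linarith
    have hstrict := bern_strict ha (by
      have : 0 < L / (m:ℝ) := div_pos hLpos hM0
      intro hc; rw [neg_eq_zero] at hc; linarith) m hm
    rw [show (1:ℝ) + -(L/(m:ℝ)) = 1 - L/(m:ℝ) by ring] at hstrict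
    have hmul : (m:ℝ) * (L / (m:ℝ)) = L := by field_simp
    have : 1 - L < (1 - L/(m:ℝ))^m := by
      calc 1 - L = 1 + (m:ℝ) * (-(L/(m:ℝ))) := by rw [mul_neg, hmul]; ring
        _ < _ := hstrict
    linarith [hLfix]
  rw [hLzero] at hlim
  -- limit of successive inverse differences
  set c : ℝ := (m.choose 2 : ℝ) / (m:ℝ)^2 with hc_def
  have hvid : ∀ n, (u (n+1))⁻¹ - (u n)⁻¹
      = hAux m (u n/(m:ℝ)) / ((m:ℝ)^2 - u n * hAux m (u n/(m:ℝ))) := by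
    intro n
    obtain ⟨hx, _⟩ := hbd n
    obtain ⟨hy, _⟩ := hbd (n+1)
    set H := hAux m (u n/(m:ℝ)) with hH
    have e1 : u (n+1) = u n - (u n)^2 * H / (m:ℝ)^2 := by rw [hrec n, hkey]
    have e2 : u n * ((m:ℝ)^2 - u n * H) = (m:ℝ)^2 * u (n+1) := by
      rw [e1]; field_simp
    have h3 : 0 < u n * ((m:ℝ)^2 - u n * H) := by rw [e2]; positivity
    have hD : 0 < (m:ℝ)^2 - u n * H := by nlinarith
    rw [eq_div_iff hD.ne']
    have hinv : (u (n+1))⁻¹ - (u n)⁻¹ = (u n - u (n+1)) / (u (n+1) * u n) :=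
      inv_sub_inv hy.ne' hx.ne'
    rw [hinv, div_mul_eq_mul_div, div_eq_iff (by positivity : u (n+1) * u n ≠ 0)]
    have e3 : u n - u (n+1) = (u n)^2 * H / (m:ℝ)^2 := by rw [e1]; ring
    rw [e3]
    field_simp
    linear_combination H * e2
  have hφ0 : hAux m (0/(m:ℝ)) / ((m:ℝ)^2 - 0 * hAux m (0/(m:ℝ))) = c := by
    rw [zero_div, hAux_zero m hm, hc_def]
    ring
  have hvlim : Tendsto (fun n => (u (n+1))⁻¹ - (u n)⁻¹) atTop (𝓝 c) := by
    have hcont : ContinuousAt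
        (fun y : ℝ => hAux m (y/(m:ℝ)) / ((m:ℝ)^2 - y * hAux m (y/(m:ℝ)))) 0 := by
      apply ContinuousAt.div
      · exact ((hAux_cont m).comp (continuous_id.div_const _)).continuousAt
      · exact (continuous_const.sub (continuous_id.mul
          ((hAux_cont m).comp (continuous_id.div_const _)))).continuousAt
      · rw [zero_mul, sub_zero]; positivity
    have h1 := hcont.tendsto.comp hlim
    rw [hφ0] at h1
    exact h1.congr fun n => (hvid n).symm
  -- Cesàro and conclusion
  have hces := hvlim.cesaro
  have htel : ∀ n, ∑ i ∈ Finset.range n, ((u (i+1))⁻¹ - (u i)⁻¹) = (u n)⁻¹ - 1 := by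
    intro n
    rw [Finset.sum_range_sub (fun i => (u i)⁻¹), h0, inv_one]
  have h1 : Tendsto (fun n : ℕ => (n:ℝ)⁻¹ * ((u n)⁻¹ - 1)) atTop (𝓝 c) :=
    hces.congr fun n => by rw [htel n]
  have h2 : Tendsto (fun n : ℕ => (n:ℝ)⁻¹) atTop (𝓝 0) :=
    tendsto_inv_atTop_nhds_zero_nat
  have h3 : Tendsto (fun n : ℕ => ((n:ℝ) * u n)⁻¹) atTop (𝓝 c) := by
    have h4 := h1.add h2
    rw [add_zero] at h4
    refine h4.congr fun n => ?_
    rw [mul_inv]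
    ring
  have hm1 : (1:ℝ) ≤ (m:ℝ) - 1 := by linarith
  have hcpos : 0 < c := by
    rw [hc_def, Nat.cast_choose_two]
    apply div_pos
    · apply div_pos
      · nlinarith
      · norm_num
    · positivity
  have h5 := h3.inv₀ hcpos.ne'
  simp only [inv_inv] at h5
  convert h5 using 2
  rw [hc_def, Nat.cast_choose_two]
  rw [div_div, inv_div]
  rw [div_eq_div_iff (by linarith) (by positivity)]
  ring
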